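/- The sigmoidal transformation of the Reichenbach implication, Ĩ(a,c) = ((1 + e^{9/2})·σ(9(I_RC(a,c) − 1/2)) − 1)/(e^{9/2} − 1) where σ(x) = 1/(1+e^{−x}) and I_RC(a,c) = 1 − a + a·c, is again a fuzzy implication: it maps [0,1]² into [0,1], is decreasing in a, increasing in c, and satisfies Ĩ(0,0) = 1, Ĩ(1,1) = 1, Ĩ(1,0) = 0. -/

import Mathlib

noncomputable def sigmoid (x : ℝ) : ℝ := 1 / (1 + Real.exp (-x))

noncomputable def sigReichenbach (a c : ℝ) : ℝ :=
  ((1 + Real.exp (9/2)) * sigmoid (9 * ((1 - a + a * c) - 1/2)) - 1) / (Real.exp (9/2) - 1)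

lemma sigmoid_mono {x y : ℝ} (h : x ≤ y) : sigmoid x ≤ sigmoid y := by
  unfold sigmoid
  have h1 : (0:ℝ) < 1 + Real.exp (-y) := by positivity
  have h2 : 1 + Real.exp (-y) ≤ 1 + Real.exp (-x) := by
    have := Real.exp_le_exp.mpr (neg_le_neg h)
    linarith
  exact one_div_le_one_div_of_le h1 h2

lemma hE : (0:ℝ) < Real.exp (9/2) - 1 := by
  have : (1:ℝ) < Real.exp (9/2) := Real.one_lt_exp_iff.mpr (by norm_num)
  linarith

lemma sr_mono {a₁ c₁ a₂ c₂ : ℝ} (h : 1 - a₂ + a₂ * c₂ ≤ 1 - a₁ + a₁ * c₁) :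
    sigReichenbach a₂ c₂ ≤ sigReichenbach a₁ c₁ := by
  unfold sigReichenbach
  have hm : sigmoid (9 * ((1 - a₂ + a₂ * c₂) - 1/2)) ≤ sigmoid (9 * ((1 - a₁ + a₁ * c₁) - 1/2)) :=
    sigmoid_mono (by linarith)
  have hp : (0:ℝ) ≤ 1 + Real.exp (9/2) := by positivity
  gcongr
  exact le_of_lt hE

lemma sr_one_zero : sigReichenbach 1 0 = 0 := by
  unfold sigReichenbach sigmoid
  have h : (9:ℝ) * ((1 - 1 + 1 * 0) - 1/2) = -(9/2) := by norm_num
  rw [h, neg_neg]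
  have : (1 + Real.exp (9/2)) * (1 / (1 + Real.exp (9/2))) - 1 = 0 := by
    field_simp
    ring
  rw [this, zero_div]

lemma sr_zero_zero : sigReichenbach 0 0 = 1 := by
  unfold sigReichenbach sigmoid
  have h : (9:ℝ) * ((1 - 0 + 0 * 0) - 1/2) = 9/2 := by norm_num
  rw [h, Real.exp_neg]
  have hp : (0:ℝ) < Real.exp (9/2) := Real.exp_pos _
  rw [div_eq_one_iff_eq (ne_of_gt hE)]
  field_simp
  ring

theorem sigmoidal_reichenbach_is_fuzzy_implication :
    (∀ a c : ℝ, a ∈ Set.Icc (0:ℝ) 1 → c ∈ Set.Icc (0:ℝ) 1 →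
      sigReichenbach a c ∈ Set.Icc (0:ℝ) 1) ∧
    (∀ a₁ a₂ c : ℝ, a₁ ∈ Set.Icc (0:ℝ) 1 → a₂ ∈ Set.Icc (0:ℝ) 1 → c ∈ Set.Icc (0:ℝ) 1 →
      a₁ ≤ a₂ → sigReichenbach a₂ c ≤ sigReichenbach a₁ c) ∧
    (∀ a c₁ c₂ : ℝ, a ∈ Set.Icc (0:ℝ) 1 → c₁ ∈ Set.Icc (0:ℝ) 1 → c₂ ∈ Set.Icc (0:ℝ) 1 →
      c₁ ≤ c₂ → sigReichenbach a c₁ ≤ sigReichenbach a c₂) ∧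
    sigReichenbach 0 0 = 1 ∧ sigReichenbach 1 1 = 1 ∧ sigReichenbach 1 0 = 0 := by
  refine ⟨?_, ?_, ?_, sr_zero_zero, ?_, sr_one_zero⟩
  · rintro a c ⟨ha0, ha1⟩ ⟨hc0, hc1⟩
    have hac : a * c ≤ a * 1 := mul_le_mul_of_nonneg_left hc1 ha0
    have hac0 : 0 ≤ a * c := mul_nonneg ha0 hc0
    constructor
    · have := sr_mono (a₁ := a) (c₁ := c) (a₂ := 1) (c₂ := 0) (by nlinarith)
      rw [sr_one_zero] at this; exact this
    · have := sr_mono (a₁ := 0) (c₁ := 0) (a₂ := a) (c₂ := c) (by nlinarith)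
      rw [sr_zero_zero] at this; exact this
  · rintro a₁ a₂ c ⟨_, _⟩ ⟨_, _⟩ ⟨hc0, hc1⟩ h
    exact sr_mono (by nlinarith)
  · rintro a c₁ c₂ ⟨ha0, _⟩ _ _ h
    exact sr_mono (by nlinarith)
  · have : (1:ℝ) - 1 + 1 * 1 = 1 - 0 + 0 * 0 := by norm_num
    have h1 := sr_mono (a₁ := 0) (c₁ := 0) (a₂ := 1) (c₂ := 1) (by norm_num)
    have h2 := sr_mono (a₁ := 1) (c₁ := 1) (a₂ := 0) (c₂ := 0) (by norm_num)
    rw [sr_zero_zero] at h1 h2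
    linarith
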